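/- Let n ≥ 1, let 0 ≤ k ≤ n−1, and let 0 ≤ m ≤ n. Then (k+1)·d_{n,m,k} = C(n−1,k)·C(n,k), where C(a,b) denotes the binomial coefficient; that is, the number of Dyck paths of semilength n with exactly m flaws and exactly k double descents equals the Narayana number (1/(k+1))·C(n−1,k)·C(n,k), independently of m. -/

import Mathlib

/-- The height of a path (list of steps; `true` = up step `U`, `false` = down step `D`)
after all its steps: #U − #D. -/
def height (l : List Bool) : ℤ := (l.count true : ℤ) - (l.count false : ℤ)

/-- `l` is a Dyck path of semilength `n`: `2n` steps ending at height `0`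
(equivalently, exactly `n` up steps). It may go below the x-axis. -/
def IsDyck (n : ℕ) (l : List Bool) : Prop := l.length = 2 * n ∧ l.count true = n

/-- The number of flaws: up steps starting at negative height. -/
def flaws (l : List Bool) : ℕ :=
  ((Finset.range l.length).filter
    (fun i => l.getD i false = true ∧ height (l.take i) < 0)).card

/-- The number of peaks: positions where an up step is immediately followed by a down step. -/
def peaks (l : List Bool) : ℕ :=
  ((Finset.range (l.length - 1)).filter
    (fun i => l.getD i false = true ∧ l.getD (i + 1) false = false)).card

/-- The number of valleys: positions where a down step is immediately followed by an up step. -/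
def valleys (l : List Bool) : ℕ :=
  ((Finset.range (l.length - 1)).filter
    (fun i => l.getD i false = false ∧ l.getD (i + 1) false = true)).card

/-- The number of double ascents: positions of two consecutive up steps. -/
def dascents (l : List Bool) : ℕ :=
  ((Finset.range (l.length - 1)).filter
    (fun i => l.getD i false = true ∧ l.getD (i + 1) false = true)).card

/-- The number of double descents: positions of two consecutive down steps. -/
def ddescents (l : List Bool) : ℕ :=
  ((Finset.range (l.length - 1)).filter
    (fun i => l.getD i false = false ∧ l.getD (i + 1) false = false)).card

/-- `p n m k`: the number of Dyck paths of semilength `n` with `m` flaws and `k` peaks. -/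
noncomputable def p (n m k : ℕ) : ℕ :=
  Nat.card {l : List Bool // IsDyck n l ∧ flaws l = m ∧ peaks l = k}

/-- `v n m k`: the number of Dyck paths of semilength `n` with `m` flaws and `k` valleys. -/
noncomputable def v (n m k : ℕ) : ℕ :=
  Nat.card {l : List Bool // IsDyck n l ∧ flaws l = m ∧ valleys l = k}

/-- `a n m k`: the number of Dyck paths of semilength `n` with `m` flaws and `k` double ascents. -/
noncomputable def a (n m k : ℕ) : ℕ :=
  Nat.card {l : List Bool // IsDyck n l ∧ flaws l = m ∧ dascents l = k}

/-- `d n m k`: the number of Dyck paths of semilength `n` with `m` flaws and `k` double descents. -/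
noncomputable def d (n m k : ℕ) : ℕ :=
  Nat.card {l : List Bool // IsDyck n l ∧ flaws l = m ∧ ddescents l = k}

namespace CF

/-- recursive double-descent count -/
def dd : List Bool → ℕ
  | [] => 0
  | [_] => 0
  | false :: false :: t => dd (false :: t) + 1
  | _ :: b :: t => dd (b :: t)

lemma dd_true_cons (l : List Bool) : dd (true :: l) = dd l := by
  cases l with
  | nil => rfl
  | cons b t => cases b <;> rfl

lemma ddescents_cons (x : Bool) (y : Bool) (l : List Bool) :
    ddescents (x :: y :: l) =
      ddescents (y :: l) + (if x = false ∧ y = false then 1 else 0) := by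
  unfold ddescents
  rw [Finset.card_filter, Finset.card_filter]
  simp only [List.length_cons, Nat.add_sub_cancel]
  rw [Finset.sum_range_succ' (fun i => if (x :: y :: l).getD i false = false ∧ (x :: y :: l).getD (i+1) false = false then 1 else 0)]
  simp [List.getD]
  apply Finset.sum_congr rfl
  intro i _
  congr

lemma ddescents_eq_dd (l : List Bool) : ddescents l = dd l := by
  match l with
  | [] => rfl
  | [x] => cases x <;> rfl
  | x :: y :: t =>
    rw [ddescents_cons, ddescents_eq_dd (y :: t)]
    cases x <;> cases y <;> simp [dd]

end CF

namespace CF2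
open CF

/-- recursive flaw count with height offset -/
def flc : ℤ → List Bool → ℕ
  | _, [] => 0
  | h, true :: t => (if h < 0 then 1 else 0) + flc (h+1) t
  | h, false :: t => flc (h-1) t

lemma height_nil : height [] = 0 := rfl

lemma height_cons (x : Bool) (l : List Bool) :
    height (x :: l) = height l + (if x then 1 else -1) := by
  cases x <;> simp [height, List.count_cons] <;> ring

lemma flc_spec (l : List Bool) (h : ℤ) :
    ((Finset.range l.length).filter
      (fun i => l.getD i false = true ∧ height (l.take i) + h < 0)).card = flc h l := by
  induction l generalizing h with
  | nil => simp [flc]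
  | cons x t ih =>
    rw [Finset.card_filter]
    simp only [List.length_cons]
    rw [Finset.sum_range_succ' (fun i => if (x :: t).getD i false = true ∧ height ((x :: t).take i) + h < 0 then 1 else 0)]
    have e1 : ∀ i : ℕ, ((x :: t).getD (i+1) false = true ∧ height ((x :: t).take (i+1)) + h < 0)
        ↔ (t.getD i false = true ∧ height (t.take i) + (h + (if x then 1 else -1)) < 0) := by
      intro i
      have : (x :: t).take (i+1) = x :: t.take i := rfl
      rw [this]
      rw [height_cons]
      constructor
      · rintro ⟨h1, h2⟩; exact ⟨h1, by omega⟩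
      · rintro ⟨h1, h2⟩; exact ⟨h1, by omega⟩
    have e2 : (∑ i ∈ Finset.range t.length,
        if (x :: t).getD (i+1) false = true ∧ height ((x :: t).take (i+1)) + h < 0 then 1 else 0) =
        flc (h + (if x then 1 else -1)) t := by
      rw [← ih (h + (if x then 1 else -1)), Finset.card_filter]
      apply Finset.sum_congr rfl
      intro i _
      simp only [e1 i]
    rw [e2]
    cases x
    · simp only [flc]
      norm_num
      rw [sub_eq_add_neg]
    · simp only [flc, List.getD, List.take_zero, height_nil, zero_add, if_true]
      norm_num
      omega

lemma flaws_eq_flc (l : List Bool) : flaws l = flc 0 l := by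
  have := flc_spec l 0
  unfold flaws
  rw [← this]
  congr 1
  apply Finset.filter_congr
  intro i _
  simp

end CF2

namespace CF3
open CF CF2

def pos (s : List ℕ) : ℕ := s.countP (fun a => decide (a ≠ 0))

lemma pos_cons (a : ℕ) (s : List ℕ) :
    pos (a :: s) = pos s + (if a ≠ 0 then 1 else 0) := by
  simp [pos, List.countP_cons]

def wd : List ℕ → List Bool
  | [] => []
  | [a] => List.replicate a false
  | a :: b :: t => List.replicate a false ++ true :: wd (b :: t)

lemma count_true_wd : ∀ (s : List ℕ), s ≠ [] → (wd s).count true = s.length - 1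
  | [a], _ => by simp [wd, List.count_replicate]
  | (a :: b :: t), _ => by
    have := count_true_wd (b :: t) (by simp)
    simp [wd, List.count_append, this, List.count_replicate]

lemma count_false_wd : ∀ (s : List ℕ), s ≠ [] → (wd s).count false = s.sum
  | [a], _ => by simp [wd]
  | (a :: b :: t), _ => by
    have := count_false_wd (b :: t) (by simp)
    simp [wd, List.count_append, this]

lemma dd_replicate : ∀ a, dd (List.replicate a false) = a - 1
  | 0 => rfl
  | 1 => rfl
  | (a+2) => by
    have h1 : List.replicate (a+2) false = false :: false :: List.replicate a false := rfl
    have h2 : (false : Bool) :: List.replicate a false = List.replicate (a+1) false := rfl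
    rw [h1]
    show dd (false :: false :: List.replicate a false) = a + 1
    rw [show dd (false :: false :: List.replicate a false)
        = dd (false :: List.replicate a false) + 1 from rfl, h2, dd_replicate (a+1)]
    omega

lemma dd_rep_append : ∀ (a : ℕ) (w : List Bool), dd (List.replicate a false ++ true :: w) = (a - 1) + dd w
  | 0, w => by simpa using dd_true_cons w
  | 1, w => by
    show dd (false :: true :: w) = 0 + dd w
    rw [show dd (false :: true :: w) = dd (true :: w) from rfl, dd_true_cons]
    omega
  | (a+2), w => by
    show dd (false :: false :: (List.replicate a false ++ true :: w)) = (a + 1) + dd w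
    rw [show dd (false :: false :: (List.replicate a false ++ true :: w))
        = dd (false :: (List.replicate a false ++ true :: w)) + 1 from rfl]
    have h2 : (false : Bool) :: (List.replicate a false ++ true :: w)
        = List.replicate (a+1) false ++ true :: w := rfl
    rw [h2, dd_rep_append (a+1) w]
    omega

lemma dd_wd : ∀ (s : List ℕ), s ≠ [] → dd (wd s) + pos s = s.sum
  | [a], _ => by
    show dd (List.replicate a false) + pos [a] = a
    rw [dd_replicate, pos]
    cases a <;> simp
  | (a :: b :: t), _ => by
    have ih := dd_wd (b :: t) (by simp)
    show dd (List.replicate a false ++ true :: wd (b :: t)) + pos (a :: b :: t) = a + (b :: t).sum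
    rw [dd_rep_append, pos_cons]
    cases a <;> simp at ih ⊢ <;> omega

lemma flc_rep_append : ∀ (a : ℕ) (h : ℤ) (w : List Bool),
    flc h (List.replicate a false ++ w) = flc (h - a) w
  | 0, h, w => by simp [flc]
  | (a+1), h, w => by
    show flc h (false :: (List.replicate a false ++ w)) = flc (h - (a+1)) w
    rw [show flc h (false :: (List.replicate a false ++ w))
        = flc (h - 1) (List.replicate a false ++ w) from rfl, flc_rep_append a (h-1) w]
    congr 1
    push_cast
    ring

lemma flc_wd_char : ∀ (s : List ℕ), s ≠ [] → ∀ h : ℤ,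
    flc h (wd s) = ((Finset.range (s.length - 1)).filter
      (fun (i : ℕ) => h + (i:ℤ) < ∑ j ∈ Finset.range (i+1), (s.getD j 0 : ℤ))).card
  | [a], _, h => by
    simp [wd]
    have : flc h (List.replicate a false) = flc (h - a) [] := by
      simpa using flc_rep_append a h []
    simp [this, flc]
  | (a :: b :: t), _, h => by
    have ih := flc_wd_char (b :: t) (by simp)
    show flc h (List.replicate a false ++ true :: wd (b :: t)) = _
    rw [flc_rep_append]
    rw [show flc (h - a) (true :: wd (b :: t))
        = (if h - a < 0 then 1 else 0) + flc (h - a + 1) (wd (b :: t)) from rfl]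
    rw [ih (h - a + 1)]
    rw [Finset.card_filter, Finset.card_filter]
    simp only [List.length_cons, Nat.add_sub_cancel]
    rw [Finset.sum_range_succ' (fun (i : ℕ) => if h + (i:ℤ) < ∑ j ∈ Finset.range (i+1), ((a :: b :: t).getD j 0 : ℤ) then 1 else 0)]
    have key : ∀ i : ℕ, (∑ j ∈ Finset.range (i+2), ((a :: b :: t).getD j 0 : ℤ))
        = a + ∑ j ∈ Finset.range (i+1), ((b :: t).getD j 0 : ℤ) := by
      intro i
      rw [Finset.sum_range_succ' (fun j => ((a :: b :: t).getD j 0 : ℤ))]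
      simp [add_comm]
    have e1 : (∑ i ∈ Finset.range ((b :: t).length - 1),
        if h + ((i+1 : ℕ) : ℤ) < ∑ j ∈ Finset.range (i+1+1), ((a :: b :: t).getD j 0 : ℤ) then 1 else 0)
        = ∑ i ∈ Finset.range ((b :: t).length - 1),
        if h - a + 1 + (i:ℤ) < ∑ j ∈ Finset.range (i+1), ((b :: t).getD j 0 : ℤ) then 1 else 0 := by
      apply Finset.sum_congr rfl
      intro i _
      apply if_congr _ rfl rfl
      rw [key i]
      push_cast
      constructor <;> intro hh <;> omega
    simp only [List.length_cons, Nat.add_sub_cancel] at e1 ⊢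
    rw [e1]
    have e0 : (if h + ((0:ℕ):ℤ) < ∑ j ∈ Finset.range (0+1), ((a :: b :: t).getD j 0 : ℤ) then 1 else 0)
        = (if h - a < 0 then (1:ℕ) else 0) := by
      have hs : ∑ j ∈ Finset.range (0+1), ((a :: b :: t).getD j 0 : ℤ) = (a:ℤ) := by simp
      rw [hs]
      simp only [Nat.cast_zero, add_zero]
      split_ifs <;> omega
    rw [e0]
    omega

end CF3

namespace CF4
open CF CF2 CF3

def cc (n : ℕ) (s : List ℕ) (j : ℕ) : ℕ := s.getD (j % (n+1)) 0
def PP (n : ℕ) (s : List ℕ) (i : ℕ) : ℕ := ∑ j ∈ Finset.range i, cc n s j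
def TT (n : ℕ) (s : List ℕ) (i : ℕ) : ℤ := (PP n s i : ℤ) - i
def KK (n : ℕ) (s : List ℕ) (w : ℕ) : ℤ := (n+1) * TT n s w + w

lemma sum_getD (s : List ℕ) : ∑ j ∈ Finset.range s.length, s.getD j 0 = s.sum := by
  induction s with
  | nil => simp
  | cons a t ih =>
    simp only [List.length_cons, List.sum_cons]
    rw [Finset.sum_range_succ' (fun j => (a :: t).getD j 0)]
    simp only [List.getD_cons_succ, List.getD_cons_zero, ih]
    omega

variable {n : ℕ} {s : List ℕ}

lemma cc_period (j : ℕ) : cc n s (j + (n+1)) = cc n s j := by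
  unfold cc; rw [Nat.add_mod_right]

lemma PP_full (hlen : s.length = n + 1) (hsum : s.sum = n) : PP n s (n+1) = n := by
  unfold PP
  have h : ∀ j ∈ Finset.range (n+1), cc n s j = s.getD j 0 := by
    intro j hj
    simp only [Finset.mem_range] at hj
    unfold cc
    rw [Nat.mod_eq_of_lt hj]
  rw [Finset.sum_congr rfl h, ← hlen, sum_getD, hsum]

lemma PP_succ (i : ℕ) : PP n s (i+1) = PP n s i + cc n s i := by
  unfold PP; rw [Finset.sum_range_succ]

lemma PP_period (hlen : s.length = n + 1) (hsum : s.sum = n) (i : ℕ) :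
    PP n s (i + (n+1)) = PP n s i + n := by
  induction i with
  | zero => simpa [PP] using PP_full hlen hsum
  | succ i ih =>
    have h : i + 1 + (n+1) = (i + (n+1)) + 1 := by omega
    rw [h, PP_succ, ih, cc_period, PP_succ]
    omega

lemma TT_period (hlen : s.length = n + 1) (hsum : s.sum = n) (i : ℕ) :
    TT n s (i + (n+1)) = TT n s i - 1 := by
  unfold TT
  rw [PP_period hlen hsum]
  push_cast
  ring

lemma PP_shift (r m : ℕ) : PP n s (r + m) = PP n s r + ∑ j ∈ Finset.range m, cc n s (r + j) := by
  induction m with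
  | zero => simp
  | succ m ih =>
    have h : r + (m+1) = (r + m) + 1 := by omega
    rw [h, PP_succ, ih, Finset.sum_range_succ]
    omega

lemma rot_getD (hlen : s.length = n + 1) (r j : ℕ) (hj : j < n + 1) :
    (s.rotate r).getD j 0 = cc n s (r + j) := by
  have hj' : j < (s.rotate r).length := by rw [List.length_rotate, hlen]; omega
  rw [List.getD_eq_getElem _ _ hj', List.getElem_rotate]
  have h2 : (r + j) % (n+1) < s.length := by rw [hlen]; exact Nat.mod_lt _ (by omega)
  unfold cc
  rw [List.getD_eq_getElem _ _ h2]
  congr 1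
  rw [hlen, Nat.add_comm j r]

lemma sum_rot_getD (hlen : s.length = n + 1) (r t : ℕ) (ht : t < n) :
    (∑ j ∈ Finset.range (t+1), ((s.rotate r).getD j 0 : ℤ))
      = (PP n s (r+t+1) : ℤ) - PP n s r := by
  have e : ∀ j ∈ Finset.range (t+1), ((s.rotate r).getD j 0 : ℤ) = (cc n s (r+j) : ℤ) := by
    intro j hj
    simp only [Finset.mem_range] at hj
    rw [rot_getD hlen r j (by omega)]
  rw [Finset.sum_congr rfl e]
  have h := PP_shift (n := n) (s := s) r (t+1)
  rw [show r + (t+1) = r + t + 1 by omega] at h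
  rw [h]
  push_cast
  ring

/-- flaw count of the r-th rotation, in terms of T -/
lemma rot_char (hlen : s.length = n + 1) (r : ℕ) :
    flc 0 (wd (s.rotate r)) =
      ((Finset.range n).filter (fun t => TT n s r ≤ TT n s (r+t+1))).card := by
  have hne : s.rotate r ≠ [] := by
    intro h
    have h2 := List.length_rotate s r
    rw [h, hlen] at h2
    simp at h2
  rw [flc_wd_char _ hne 0]
  have hlr : (s.rotate r).length = n + 1 := by rw [List.length_rotate, hlen]
  rw [hlr]
  simp only [Nat.add_sub_cancel]
  congr 1
  apply Finset.filter_congr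
  intro t ht
  simp only [Finset.mem_range] at ht
  rw [sum_rot_getD hlen r t ht]
  unfold TT
  push_cast
  constructor <;> intro hh <;> omega

end CF4

namespace CF5
open CF CF2 CF3 CF4

lemma mod_small {x n : ℕ} (h : x < 2*(n+1)) :
    x % (n+1) = if x < n+1 then x else x - (n+1) := by
  split_ifs with hc
  · exact Nat.mod_eq_of_lt hc
  · rw [Nat.mod_eq_sub_mod (by omega)]
    exact Nat.mod_eq_of_lt (by omega)

variable {n : ℕ} {s : List ℕ}

lemma KK_ne {w r : ℕ} (hne : w ≠ r) (hw : w ≤ n) (hr : r ≤ n) :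
    KK n s w ≠ KK n s r := by
  intro h
  unfold KK at h
  have hD : ((n:ℤ)+1) * (TT n s w - TT n s r) = (r:ℤ) - w := by linarith [h]
  have hdvd : ((n:ℤ)+1) ∣ ((r:ℤ) - w) := ⟨_, hD.symm⟩
  have h0 : (r:ℤ) - w = 0 := by
    refine Int.eq_zero_of_abs_lt_dvd hdvd ?_
    rw [abs_lt]
    constructor <;> [omega; omega]
  omega

lemma helper1 {w r : ℕ} (hrw : r < w) (hw : w ≤ n) :
    (TT n s r ≤ TT n s w) ↔ KK n s r < KK n s w := by
  unfold KK
  constructor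
  · intro h
    have h2 : (0:ℤ) ≤ ((n:ℤ)+1) * (TT n s w - TT n s r) :=
      mul_nonneg (by positivity) (by linarith)
    have : ((w:ℤ)) - r ≥ 1 := by
      have : (r:ℤ) < w := by exact_mod_cast hrw
      omega
    nlinarith
  · intro h
    by_contra hc
    push_neg at hc
    have h1 : TT n s w - TT n s r ≤ -1 := by omega
    have h2 : ((n:ℤ)+1) * (TT n s w - TT n s r) ≤ ((n:ℤ)+1) * (-1) :=
      mul_le_mul_of_nonneg_left h1 (by positivity)
    have h3 : ((w:ℤ)) - r ≤ n := by
      have : (w:ℤ) ≤ n := by exact_mod_cast hw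
      have : (0:ℤ) ≤ r := by positivity
      omega
    nlinarith

lemma helper2 {w r : ℕ} (hwr : w < r) (hr : r ≤ n) :
    (TT n s r + 1 ≤ TT n s w) ↔ KK n s r < KK n s w := by
  unfold KK
  constructor
  · intro h
    have h2 : ((n:ℤ)+1) * 1 ≤ ((n:ℤ)+1) * (TT n s w - TT n s r) :=
      mul_le_mul_of_nonneg_left (by linarith) (by positivity)
    have h3 : ((r:ℤ)) - w ≤ n := by
      have : (r:ℤ) ≤ n := by exact_mod_cast hr
      have : (0:ℤ) ≤ w := by positivity
      omega
    nlinarith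
  · intro h
    by_contra hc
    push_neg at hc
    have h1 : TT n s w - TT n s r ≤ 0 := by omega
    have h2 : ((n:ℤ)+1) * (TT n s w - TT n s r) ≤ 0 :=
      mul_nonpos_of_nonneg_of_nonpos (by positivity) h1
    have h3 : (1:ℤ) ≤ (r:ℤ) - w := by
      have : (w:ℤ) < r := by exact_mod_cast hwr
      omega
    nlinarith

lemma rank_char (hlen : s.length = n + 1) (hsum : s.sum = n) {r : ℕ} (hr : r ≤ n) :
    ((Finset.range n).filter (fun t => TT n s r ≤ TT n s (r+t+1))).card
      = ((Finset.range (n+1)).filter (fun w => KK n s r < KK n s w)).card := by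
  apply Finset.card_bij (fun t _ => (r+t+1) % (n+1))
  · intro t ht
    simp only [Finset.mem_filter, Finset.mem_range] at ht ⊢
    obtain ⟨ht1, ht2⟩ := ht
    have hmod := mod_small (x := r+t+1) (n := n) (by omega)
    constructor
    · rw [hmod]; split_ifs <;> omega
    · by_cases hc : r+t+1 < n+1
      · rw [hmod, if_pos hc]
        exact (helper1 (by omega) (by omega)).mp ht2
      · rw [hmod, if_neg hc]
        set w := r+t+1 - (n+1) with hw
        have hwr : w < r := by omega
        have hTi : TT n s (r+t+1) = TT n s w - 1 := by
          have := TT_period hlen hsum w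
          rw [show w + (n+1) = r+t+1 by omega] at this
          omega
        refine (helper2 hwr hr).mp ?_
        omega
  · intro t1 h1 t2 h2 heq
    simp only [Finset.mem_filter, Finset.mem_range] at h1 h2
    have m1 := mod_small (x := r+t1+1) (n := n) (by omega)
    have m2 := mod_small (x := r+t2+1) (n := n) (by omega)
    rw [m1, m2] at heq
    split_ifs at heq <;> omega
  · intro w hw
    simp only [Finset.mem_filter, Finset.mem_range] at hw
    obtain ⟨hw1, hw2⟩ := hw
    have hne : w ≠ r := by
      intro h; rw [h] at hw2; exact lt_irrefl _ hw2
    rcases Nat.lt_or_ge r w with hrw | hwr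
    · refine ⟨w - r - 1, ?_, ?_⟩
      · simp only [Finset.mem_filter, Finset.mem_range]
        constructor
        · omega
        · rw [show r + (w - r - 1) + 1 = w by omega]
          exact (helper1 hrw (by omega)).mpr hw2
      · have := mod_small (x := r + (w-r-1) + 1) (n := n) (by omega)
        rw [this]
        split_ifs <;> omega
    · have hwr' : w < r := by omega
      refine ⟨w + n - r, ?_, ?_⟩
      · simp only [Finset.mem_filter, Finset.mem_range]
        constructor
        · omega
        · rw [show r + (w + n - r) + 1 = w + (n+1) by omega]
          rw [TT_period hlen hsum w]
          have := (helper2 hwr' hr).mpr hw2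
          omega
      · have := mod_small (x := r + (w + n - r) + 1) (n := n) (by omega)
        rw [this]
        split_ifs <;> omega

lemma F_le (hlen : s.length = n + 1) (r : ℕ) : flc 0 (wd (s.rotate r)) ≤ n := by
  rw [rot_char hlen r]
  calc ((Finset.range n).filter _).card ≤ (Finset.range n).card := Finset.card_filter_le _ _
    _ = n := Finset.card_range n

lemma F_lt (hlen : s.length = n + 1) (hsum : s.sum = n) {r1 r2 : ℕ}
    (h1 : r1 ≤ n) (h2 : r2 ≤ n) (hK : KK n s r1 < KK n s r2) :
    flc 0 (wd (s.rotate r2)) < flc 0 (wd (s.rotate r1)) := by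
  rw [rot_char hlen r1, rot_char hlen r2, rank_char hlen hsum h1, rank_char hlen hsum h2]
  apply Finset.card_lt_card
  rw [Finset.ssubset_iff_of_subset]
  · refine ⟨r2, ?_, ?_⟩
    · simp only [Finset.mem_filter, Finset.mem_range]
      exact ⟨by omega, hK⟩
    · simp only [Finset.mem_filter, Finset.mem_range, not_and]
      intro _
      exact lt_irrefl _
  · intro w hw
    simp only [Finset.mem_filter, Finset.mem_range] at hw ⊢
    exact ⟨hw.1, hK.trans hw.2⟩

lemma F_inj (hlen : s.length = n + 1) (hsum : s.sum = n) {r1 r2 : ℕ}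
    (h1 : r1 ≤ n) (h2 : r2 ≤ n)
    (heq : flc 0 (wd (s.rotate r1)) = flc 0 (wd (s.rotate r2))) : r1 = r2 := by
  by_contra hne
  rcases lt_or_gt_of_ne (KK_ne (s := s) hne h1 h2) with h | h
  · exact absurd heq (Nat.ne_of_gt (F_lt hlen hsum h1 h2 h))
  · exact absurd heq (Nat.ne_of_lt (F_lt hlen hsum h2 h1 h))

lemma F_surj (hlen : s.length = n + 1) (hsum : s.sum = n) {m : ℕ} (hm : m ≤ n) :
    ∃ r ≤ n, flc 0 (wd (s.rotate r)) = m := by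
  set g : Fin (n+1) → Fin (n+1) := fun r => ⟨flc 0 (wd (s.rotate r.val)), by
    have := F_le (s := s) hlen r.val; omega⟩ with hg
  have hinj : Function.Injective g := by
    intro a b hab
    have : flc 0 (wd (s.rotate a.val)) = flc 0 (wd (s.rotate b.val)) := by
      have := congrArg Fin.val hab
      simpa [hg] using this
    exact Fin.ext (F_inj hlen hsum (by omega) (by omega) this)
  have hsurj : Function.Surjective g := Finite.surjective_of_injective hinj
  obtain ⟨r, hr⟩ := hsurj ⟨m, by omega⟩
  refine ⟨r.val, by omega, ?_⟩
  have := congrArg Fin.val hr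
  simpa [hg] using this

end CF5

namespace CF6
open CF CF2 CF3

def cnt (L t j : ℕ) : ℕ :=
  if j = 0 then (if t = 0 then 1 else 0)
  else if j ≤ t then Nat.choose L j * Nat.choose (t-1) (j-1) else 0

def LS : ℕ → ℕ → ℕ → Finset (List ℕ)
  | 0, t, j => if t = 0 ∧ j = 0 then {[]} else ∅
  | (L+1), t, j => (Finset.range (t+1)).biUnion (fun a =>
      if a = 0 then (LS L t j).image (List.cons 0)
      else if j = 0 then ∅ else (LS L (t-a) (j-1)).image (List.cons a))

lemma mem_LS : ∀ (L t j : ℕ) (x : List ℕ),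
    x ∈ LS L t j ↔ x.length = L ∧ x.sum = t ∧ pos x = j := by
  intro L
  induction L with
  | zero =>
    intro t j x
    unfold LS
    constructor
    · intro hx
      split_ifs at hx with hc
      · simp only [Finset.mem_singleton] at hx
        subst hx
        simp [pos, hc.1, hc.2]
      · simp at hx
    · rintro ⟨h1, h2, h3⟩
      have hx : x = [] := List.eq_nil_of_length_eq_zero h1
      subst hx
      simp [pos] at h2 h3
      simp [h2.symm, h3.symm]
  | succ L ih =>
    intro t j x
    unfold LS
    rw [Finset.mem_biUnion]
    constructor
    · rintro ⟨a, ha, hx⟩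
      simp only [Finset.mem_range] at ha
      split_ifs at hx with hc hj
      · simp only [Finset.mem_image] at hx
        obtain ⟨y, hy, rfl⟩ := hx
        rw [ih] at hy
        obtain ⟨hy1, hy2, hy3⟩ := hy
        refine ⟨by simp [hy1], by simp [hy2], ?_⟩
        rw [pos_cons]
        simp [hy3]
      · simp at hx
      · simp only [Finset.mem_image] at hx
        obtain ⟨y, hy, rfl⟩ := hx
        rw [ih] at hy
        obtain ⟨hy1, hy2, hy3⟩ := hy
        refine ⟨by simp [hy1], by simp [hy2]; omega, ?_⟩
        rw [pos_cons, hy3]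
        simp [hc]
        omega
    · rintro ⟨h1, h2, h3⟩
      match x with
      | [] => simp at h1
      | a :: y =>
        refine ⟨a, ?_, ?_⟩
        · simp only [Finset.mem_range]
          simp at h2
          omega
        · simp only [List.length_cons] at h1
          simp only [List.sum_cons] at h2
          rw [pos_cons] at h3
          by_cases hc : a = 0
          · subst hc
            rw [if_pos rfl]
            simp only [Finset.mem_image]
            exact ⟨y, (ih t j y).mpr ⟨by omega, by omega, by simp at h3; omega⟩, rfl⟩
          · rw [if_neg hc]
            have hj : j ≠ 0 := by
              simp [hc] at h3
              omega
            rw [if_neg hj]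
            simp only [Finset.mem_image]
            refine ⟨y, (ih (t-a) (j-1) y).mpr ⟨by omega, by omega, ?_⟩, rfl⟩
            simp [hc] at h3
            omega

lemma sumcnt (L j : ℕ) : ∀ t : ℕ, (∑ b ∈ Finset.range t, cnt L b j)
    = if j+1 ≤ t then Nat.choose L j * Nat.choose (t-1) j else 0 := by
  intro t
  induction t with
  | zero => simp
  | succ t ih =>
    rw [Finset.sum_range_succ, ih]
    by_cases hj : j = 0
    · subst hj
      simp only [cnt, if_pos rfl]
      by_cases ht : t = 0
      · subst ht; simp
      · rw [if_pos (by omega : 0+1 ≤ t), if_pos (by omega : 0+1 ≤ t+1), if_neg ht]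
        simp
    · simp only [cnt, if_neg hj]
      rcases Nat.lt_trichotomy t j with h | h | h
      · rw [if_neg (by omega : ¬ j+1 ≤ t), if_neg (by omega : ¬ j ≤ t),
          if_neg (by omega : ¬ j+1 ≤ t+1)]
      · subst h
        rw [if_neg (by omega : ¬ t+1 ≤ t), if_pos (le_refl t), if_pos (by omega : t+1 ≤ t+1)]
        have h1 : Nat.choose (t-1) (t-1) = 1 := Nat.choose_self _
        have h2 : Nat.choose (t+1-1) t = 1 := by
          rw [show t+1-1 = t by omega]; exact Nat.choose_self t
        rw [h1, h2]
        omega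
      · rw [if_pos (by omega : j+1 ≤ t), if_pos (by omega : j ≤ t),
          if_pos (by omega : j+1 ≤ t+1)]
        have hpascal : Nat.choose t j = Nat.choose (t-1) (j-1) + Nat.choose (t-1) j := by
          obtain ⟨t', rfl⟩ : ∃ t', t = t'+1 := ⟨t-1, by omega⟩
          obtain ⟨j', rfl⟩ : ∃ j', j = j'+1 := ⟨j-1, by omega⟩
          simpa using Nat.choose_succ_succ t' j'
        rw [show t+1-1 = t by omega, hpascal]
        ring

lemma branch_shape {L t j a : ℕ} {x : List ℕ}
    (hx : x ∈ (if a = 0 then (LS L t j).image (List.cons 0)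
      else if j = 0 then ∅ else (LS L (t-a) (j-1)).image (List.cons a))) :
    ∃ y, x = a :: y := by
  split_ifs at hx with h1 h2
  · simp only [Finset.mem_image] at hx
    obtain ⟨y, _, rfl⟩ := hx
    exact ⟨y, by rw [h1]⟩
  · simp at hx
  · simp only [Finset.mem_image] at hx
    obtain ⟨y, _, rfl⟩ := hx
    exact ⟨y, rfl⟩

lemma card_LS : ∀ L t j, (LS L t j).card = cnt L t j := by
  intro L
  induction L with
  | zero =>
    intro t j
    unfold LS cnt
    by_cases h1 : t = 0 ∧ j = 0
    · rw [if_pos h1, if_pos h1.2, if_pos h1.1]; simp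
    · rw [if_neg h1]
      simp only [Finset.card_empty]
      by_cases hj : j = 0
      · have ht : ¬ t = 0 := by tauto
        rw [if_pos hj, if_neg ht]
      · rw [if_neg hj]
        by_cases hjt : j ≤ t
        · rw [if_pos hjt, Nat.choose_eq_zero_of_lt (by omega), zero_mul]
        · rw [if_neg hjt]
  | succ L ih =>
    intro t j
    show ((Finset.range (t+1)).biUnion _).card = _
    rw [Finset.card_biUnion]
    · have hbr : ∀ a ∈ Finset.range (t+1), ((if a = 0 then (LS L t j).image (List.cons 0)
          else if j = 0 then ∅ else (LS L (t-a) (j-1)).image (List.cons a)).card)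
          = if a = 0 then cnt L t j else (if j = 0 then 0 else cnt L (t-a) (j-1)) := by
        intro a _
        split_ifs with h1 h2
        · rw [Finset.card_image_of_injective _ (List.cons_injective), ih]
        · simp
        · rw [Finset.card_image_of_injective _ (List.cons_injective), ih]
      rw [Finset.sum_congr rfl hbr]
      rw [Finset.sum_range_succ'
        (fun a => if a = 0 then cnt L t j else (if j = 0 then 0 else cnt L (t-a) (j-1)))]
      have hterm : ∀ a ∈ Finset.range t,
          (if a+1 = 0 then cnt L t j else (if j = 0 then 0 else cnt L (t-(a+1)) (j-1)))
          = if j = 0 then 0 else cnt L (t-(a+1)) (j-1) :=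
        fun a _ => if_neg (Nat.succ_ne_zero a)
      rw [Finset.sum_congr rfl hterm]
      rw [if_pos rfl]
      by_cases hj : j = 0
      · subst hj
        simp [cnt]
      · rw [Finset.sum_congr rfl (fun a (_ : a ∈ Finset.range t) => if_neg hj)]
        have hre : (∑ a ∈ Finset.range t, cnt L (t-(a+1)) (j-1))
            = ∑ b ∈ Finset.range t, cnt L b (j-1) := by
          have := Finset.sum_range_reflect (fun b => cnt L b (j-1)) t
          rw [← this]
          apply Finset.sum_congr rfl
          intro a ha
          simp only [Finset.mem_range] at ha
          congr 1
          omega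
        rw [hre, sumcnt, show (j-1)+1 = j by omega]
        unfold cnt
        rw [if_neg hj, if_neg hj]
        by_cases hjt : j ≤ t
        · rw [if_pos hjt, if_pos hjt]
          have hpascal : Nat.choose (L+1) j = Nat.choose L (j-1) + Nat.choose L j := by
            obtain ⟨j', rfl⟩ : ∃ j', j = j'+1 := ⟨j-1, by omega⟩
            simpa using Nat.choose_succ_succ L j'
          rw [hpascal, if_pos hjt]
          ring
        · rw [if_neg hjt, if_neg hjt, if_neg hjt]
    · intro a ha b hb hab
      simp only [Function.onFun]
      rw [Finset.disjoint_left]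
      intro x hxa hxb
      obtain ⟨y, rfl⟩ := branch_shape hxa
      obtain ⟨y', hy'⟩ := branch_shape hxb
      injection hy' with h1 h2
      exact hab h1

end CF6

namespace CF7
open CF CF2 CF3 CF4 CF5 CF6

def gaps : List Bool → List ℕ
  | [] => [0]
  | true :: t => 0 :: gaps t
  | false :: t => ((gaps t).headI + 1) :: (gaps t).tail

lemma gaps_ne_nil : ∀ l, gaps l ≠ []
  | [] => by simp [gaps]
  | true :: t => by simp [gaps]
  | false :: t => by simp [gaps]

lemma gaps_cons_exists (l : List Bool) : ∃ b u, gaps l = b :: u := by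
  cases h : gaps l with
  | nil => exact absurd h (gaps_ne_nil l)
  | cons b u => exact ⟨b, u, rfl⟩

lemma wd_cons (a : ℕ) (u : List ℕ) (h : u ≠ []) :
    wd (a :: u) = List.replicate a false ++ true :: wd u := by
  match u with
  | [] => exact absurd rfl h
  | b :: v => rfl

lemma wd_zero_cons (u : List ℕ) (h : u ≠ []) : wd (0 :: u) = true :: wd u := by
  rw [wd_cons 0 u h]; rfl

lemma wd_succ_cons (a : ℕ) (u : List ℕ) : wd ((a+1) :: u) = false :: wd (a :: u) := by
  match u with
  | [] => rfl
  | b :: v => rfl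

lemma wd_gaps : ∀ l, wd (gaps l) = l
  | [] => rfl
  | (true :: t) => by
    show wd (0 :: gaps t) = true :: t
    rw [wd_zero_cons _ (gaps_ne_nil t), wd_gaps t]
  | (false :: t) => by
    obtain ⟨b, u, hbu⟩ := gaps_cons_exists t
    show wd (((gaps t).headI + 1) :: (gaps t).tail) = false :: t
    rw [hbu]
    simp only [List.headI, List.tail_cons]
    rw [wd_succ_cons, ← hbu, wd_gaps t]

lemma gaps_replicate : ∀ a : ℕ, gaps (List.replicate a false) = [a]
  | 0 => rfl
  | (a+1) => by
    show gaps (false :: List.replicate a false) = [a+1]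
    show ((gaps (List.replicate a false)).headI + 1) :: (gaps (List.replicate a false)).tail = [a+1]
    rw [gaps_replicate a]
    rfl

lemma gaps_rep_append : ∀ (a : ℕ) (l : List Bool),
    gaps (List.replicate a false ++ l) = ((gaps l).headI + a) :: (gaps l).tail
  | 0, l => by
    obtain ⟨b, u, hbu⟩ := gaps_cons_exists l
    simp [hbu]
  | (a+1), l => by
    show gaps (false :: (List.replicate a false ++ l)) = _
    show ((gaps (List.replicate a false ++ l)).headI + 1) :: (gaps (List.replicate a false ++ l)).tail = _
    rw [gaps_rep_append a l]
    simp only [List.headI, List.tail_cons, Nat.add_assoc]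

lemma gaps_wd : ∀ s : List ℕ, s ≠ [] → gaps (wd s) = s
  | [a], _ => by
    show gaps (List.replicate a false) = [a]
    exact gaps_replicate a
  | (a :: b :: t), _ => by
    have ih := gaps_wd (b :: t) (by simp)
    show gaps (List.replicate a false ++ true :: wd (b :: t)) = a :: b :: t
    rw [gaps_rep_append]
    have h1 : gaps (true :: wd (b :: t)) = 0 :: gaps (wd (b :: t)) := rfl
    rw [h1, ih]
    simp

lemma length_bool (l : List Bool) : l.count true + l.count false = l.length := by
  induction l with
  | nil => rfl
  | cons x t ih => cases x <;> simp [List.count_cons] <;> omega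

end CF7

namespace CF8
open CF CF2 CF3 CF4 CF5 CF6 CF7

def Ptot (n k : ℕ) (s : List ℕ) : Prop :=
  s.length = n+1 ∧ s.sum = n ∧ pos s = n-k

def Pm (n k m : ℕ) (s : List ℕ) : Prop := Ptot n k s ∧ flc 0 (wd s) = m

lemma isDyck_props (n k m : ℕ) (hk : k ≤ n) (s : List ℕ) (hs : s ≠ []) :
    (IsDyck n (wd s) ∧ flaws (wd s) = m ∧ ddescents (wd s) = k) ↔ Pm n k m s := by
  unfold IsDyck Pm Ptot
  rw [flaws_eq_flc, ddescents_eq_dd]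
  have h1 := count_true_wd s hs
  have h2 := count_false_wd s hs
  have h3 := dd_wd s hs
  have h4 := length_bool (wd s)
  have h5 : 1 ≤ s.length := List.length_pos_iff.mpr hs
  constructor
  · rintro ⟨⟨hl, hc⟩, hf, hd⟩
    exact ⟨⟨by omega, by omega, by omega⟩, hf⟩
  · rintro ⟨⟨hl, hsum, hpos⟩, hf⟩
    exact ⟨⟨by omega, by omega⟩, hf, by omega⟩

def e1 (n k m : ℕ) (hk : k ≤ n) :
    {l : List Bool // IsDyck n l ∧ flaws l = m ∧ ddescents l = k} ≃ {s : List ℕ // Pm n k m s} where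
  toFun := fun x => ⟨gaps x.val, by
    have hx := x.property
    rw [show x.val = wd (gaps x.val) from (wd_gaps x.val).symm] at hx
    exact (isDyck_props n k m hk _ (gaps_ne_nil _)).mp hx⟩
  invFun := fun y => ⟨wd y.val, by
    have hy := y.property
    have hne : y.val ≠ [] := by
      intro h
      have := hy.1.1
      rw [h] at this
      simp at this
    exact (isDyck_props n k m hk _ hne).mpr hy⟩
  left_inv := fun x => Subtype.ext (wd_gaps x.val)
  right_inv := fun y => Subtype.ext (gaps_wd y.val (by
    intro h
    have := y.property.1.1
    rw [h] at this
    simp at this))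

lemma entry_le_sum (s : List ℕ) (i : ℕ) : s.getD i 0 ≤ s.sum := by
  by_cases h : i < s.length
  · rw [List.getD_eq_getElem _ _ h]
    exact List.single_le_sum (fun x _ => Nat.zero_le x) _ (List.getElem_mem h)
  · rw [List.getD_eq_default _ _ (by omega)]
    exact Nat.zero_le _

lemma finite_aux (n : ℕ) (Q : List ℕ → Prop)
    (hQ : ∀ s, Q s → s.length = n+1 ∧ s.sum = n) : Finite {s // Q s} := by
  apply Finite.of_injective (f := fun (x : {s // Q s}) =>
    (fun i : Fin (n+1) => (⟨x.val.getD i 0, by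
      have h1 := entry_le_sum x.val i
      have h2 := (hQ x.val x.property).2
      omega⟩ : Fin (n+1))))
  intro x y hxy
  apply Subtype.ext
  have hlx := (hQ x.val x.property).1
  have hly := (hQ y.val y.property).1
  apply List.ext_getElem (by omega)
  intro i hi1 hi2
  have := congrFun hxy ⟨i, by omega⟩
  simp only [Fin.mk.injEq] at this
  rw [← List.getD_eq_getElem x.val 0 hi1, ← List.getD_eq_getElem y.val 0 hi2]
  exact this

lemma finite_Pm (n k m : ℕ) : Finite {s // Pm n k m s} :=
  finite_aux n _ (fun s hs => ⟨hs.1.1, hs.1.2.1⟩)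

lemma finite_Ptot (n k : ℕ) : Finite {s // Ptot n k s} :=
  finite_aux n _ (fun s hs => ⟨hs.1, hs.2.1⟩)

lemma Ptot_rotate (n k r : ℕ) {s : List ℕ} (h : Ptot n k s) : Ptot n k (s.rotate r) := by
  have hp := List.rotate_perm s r
  exact ⟨by rw [List.length_rotate]; exact h.1,
    by rw [hp.sum_eq]; exact h.2.1,
    by unfold pos; rw [hp.countP_eq]; exact h.2.2⟩

lemma unrotate {n : ℕ} {s : List ℕ} (hlen : s.length = n+1) {r : ℕ} (hr : r ≤ n) :
    (s.rotate r).rotate (((n+1) - r) % (n+1)) = s := by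
  rw [List.rotate_rotate]
  by_cases h0 : r = 0
  · subst h0
    simp [Nat.mod_self, List.rotate_zero]
  · rw [Nat.mod_eq_of_lt (by omega), show r + ((n+1) - r) = n+1 by omega, ← hlen,
      List.rotate_length]

lemma card_Pm_eq (n k m m' : ℕ) (hm : m ≤ n) (hm' : m' ≤ n) :
    Nat.card {s // Pm n k m s} = Nat.card {s // Pm n k m' s} := by
  classical
  have hex : ∀ x : {s // Pm n k m s}, ∃ r, r ≤ n ∧ flc 0 (wd (x.val.rotate r)) = m' :=
    fun x => F_surj x.2.1.1 x.2.1.2.1 hm'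
  choose rch hrle hrval using hex
  apply Nat.card_eq_of_bijective
    (f := fun x => (⟨x.val.rotate (rch x), ⟨Ptot_rotate n k _ x.2.1, hrval x⟩⟩ : {s // Pm n k m' s}))
  constructor
  · intro x y hxy
    have hval : x.val.rotate (rch x) = y.val.rotate (rch y) := congrArg Subtype.val hxy
    have htp : Ptot n k (x.val.rotate (rch x)) := Ptot_rotate n k _ x.2.1
    have hxu : (x.val.rotate (rch x)).rotate (((n+1) - rch x) % (n+1)) = x.val :=
      unrotate x.2.1.1 (hrle x)
    have hyu : (x.val.rotate (rch x)).rotate (((n+1) - rch y) % (n+1)) = y.val := by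
      rw [hval]; exact unrotate y.2.1.1 (hrle y)
    have hab : ((n+1) - rch x) % (n+1) = ((n+1) - rch y) % (n+1) := by
      apply F_inj htp.1 htp.2.1 (Nat.le_of_lt_succ (Nat.mod_lt _ (by omega)))
        (Nat.le_of_lt_succ (Nat.mod_lt _ (by omega)))
      rw [hxu, hyu, x.2.2, y.2.2]
    apply Subtype.ext
    rw [← hxu, ← hyu, hab]
  · intro y
    obtain ⟨r, hr, hval⟩ : ∃ r, r ≤ n ∧ flc 0 (wd (y.val.rotate r)) = m :=
      F_surj y.2.1.1 y.2.1.2.1 hm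
    set x : {s // Pm n k m s} := ⟨y.val.rotate r, ⟨Ptot_rotate n k _ y.2.1, hval⟩⟩ with hx
    refine ⟨x, ?_⟩
    apply Subtype.ext
    show x.val.rotate (rch x) = y.val
    have hxp : Ptot n k x.val := Ptot_rotate n k _ y.2.1
    have hyu : x.val.rotate (((n+1) - r) % (n+1)) = y.val := unrotate y.2.1.1 hr
    have hab : rch x = ((n+1) - r) % (n+1) := by
      apply F_inj hxp.1 hxp.2.1 (hrle x) (Nat.le_of_lt_succ (Nat.mod_lt _ (by omega)))
      rw [hrval x, hyu, y.2.2]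
    rw [hab, hyu]

end CF8

namespace CF9
open CF CF2 CF3 CF4 CF5 CF6 CF7 CF8

lemma nat_card_sigma {ι : Type} [Fintype ι] (f : ι → Type) [∀ i, Finite (f i)] :
    Nat.card (Σ i, f i) = ∑ i, Nat.card (f i) := by
  classical
  letI : ∀ i, Fintype (f i) := fun i => Fintype.ofFinite (f i)
  rw [Nat.card_eq_fintype_card, Fintype.card_sigma]
  exact Finset.sum_congr rfl (fun i _ => (Nat.card_eq_fintype_card).symm)

lemma card_tot (n k : ℕ) :
    Nat.card {s // Ptot n k s} = ∑ m ∈ Finset.range (n+1), Nat.card {s // Pm n k m s} := by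
  classical
  haveI := finite_Ptot n k
  haveI : ∀ m', Finite {s // Pm n k m' s} := fun m' => finite_Pm n k m'
  have hle : ∀ x : {s // Ptot n k s}, flc 0 (wd x.val) < n+1 := fun x => by
    have h := F_le x.2.1 0
    rw [List.rotate_zero] at h
    omega
  set f : {s // Ptot n k s} → Fin (n+1) := fun x => ⟨flc 0 (wd x.val), hle x⟩ with hf
  have e := Equiv.sigmaFiberEquiv f
  have efib : ∀ i : Fin (n+1), {x : {s // Ptot n k s} // f x = i} ≃ {s // Pm n k i.val s} :=
    fun i =>
    { toFun := fun x => ⟨x.val.val, ⟨x.val.property, by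
        have := congrArg Fin.val x.property
        exact this⟩⟩
      invFun := fun y => ⟨⟨y.val, y.property.1⟩, Fin.ext y.property.2⟩
      left_inv := fun x => Subtype.ext (Subtype.ext rfl)
      right_inv := fun y => Subtype.ext rfl }
  haveI : ∀ i : Fin (n+1), Finite {x : {s // Ptot n k s} // f x = i} :=
    fun i => Finite.of_equiv _ (efib i).symm
  calc Nat.card {s // Ptot n k s} = Nat.card (Σ i : Fin (n+1), {x : {s // Ptot n k s} // f x = i}) :=
        (Nat.card_congr e).symm
    _ = ∑ i : Fin (n+1), Nat.card {x : {s // Ptot n k s} // f x = i} := nat_card_sigma _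
    _ = ∑ i : Fin (n+1), Nat.card {s // Pm n k i.val s} :=
        Finset.sum_congr rfl (fun i _ => Nat.card_congr (efib i))
    _ = ∑ m ∈ Finset.range (n+1), Nat.card {s // Pm n k m s} := by
        rw [Finset.sum_range fun m => Nat.card {s // Pm n k m s}]

lemma card_tot_LS (n k : ℕ) : Nat.card {s // Ptot n k s} = cnt (n+1) n (n-k) := by
  rw [← card_LS, ← Nat.card_eq_finsetCard]
  apply Nat.card_congr
  apply Equiv.subtypeEquivRight
  intro s
  rw [mem_LS]
  exact Iff.rfl

theorem ddescent_chung_feller' (n m k : ℕ) (hn : 1 ≤ n) (hk : k ≤ n - 1) (hm : m ≤ n) :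
    (k + 1) * d n m k = Nat.choose (n - 1) k * Nat.choose n k := by
  have hk' : k ≤ n := le_trans hk (Nat.sub_le n 1)
  have hd : d n m k = Nat.card {s // Pm n k m s} := Nat.card_congr (e1 n k m hk')
  have hsum : Nat.card {s // Ptot n k s} = (n+1) * d n m k := by
    rw [card_tot]
    have hcongr : ∀ m' ∈ Finset.range (n+1),
        Nat.card {s // Pm n k m' s} = d n m k := by
      intro m' hm'
      simp only [Finset.mem_range] at hm'
      rw [hd]
      exact card_Pm_eq n k m' m (by omega) hm
    rw [Finset.sum_congr rfl hcongr]
    rw [Finset.sum_const, Finset.card_range]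
    simp [Nat.succ_mul]
  have htot : Nat.card {s // Ptot n k s} = Nat.choose (n+1) (k+1) * Nat.choose (n-1) k := by
    rw [card_tot_LS]
    unfold cnt
    rw [if_neg (show ¬ (n - k = 0) by omega), if_pos (show n-k ≤ n by omega)]
    congr 1
    · rw [show n - k = (n+1) - (k+1) by omega]
      exact Nat.choose_symm (by omega)
    · rw [show n - k - 1 = (n-1) - k by omega]
      exact Nat.choose_symm (by omega)
  have key : (n+1) * d n m k = Nat.choose (n+1) (k+1) * Nat.choose (n-1) k := by
    rw [← hsum, htot]
  have hmul : (n+1) * Nat.choose n k = Nat.choose (n+1) (k+1) * (k+1) :=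
    Nat.add_one_mul_choose_eq n k
  apply Nat.eq_of_mul_eq_mul_left (show 0 < n+1 by omega)
  calc (n+1) * ((k+1) * d n m k) = (k+1) * ((n+1) * d n m k) := by ring
    _ = (k+1) * (Nat.choose (n+1) (k+1) * Nat.choose (n-1) k) := by rw [key]
    _ = ((n+1) * Nat.choose n k) * Nat.choose (n-1) k := by rw [hmul]; ring
    _ = (n+1) * (Nat.choose (n-1) k * Nat.choose n k) := by ring

end CF9

/-- Chung-Feller theorem for double descents: `(k+1) d_{n,m,k} = C(n-1,k) C(n,k)`,
i.e. `d_{n,m,k}` is the Narayana number, independently of `m`. -/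
theorem ddescent_chung_feller (n m k : ℕ) (hn : 1 ≤ n) (hk : k ≤ n - 1) (hm : m ≤ n) :
    (k + 1) * d n m k = Nat.choose (n - 1) k * Nat.choose n k := by
  exact CF9.ddescent_chung_feller' n m k hn hk hm
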